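/- (Forcing cube.) Consider the 2×2×2 game form with values g(1,1,1)=d, g(2,1,1)=a, g(1,2,1)=a, g(2,2,1)=c, g(1,1,2)=f, g(2,1,2)=b, g(1,2,2)=b, g(2,2,2)=e, where a,b,c,d,e,f are six pairwise distinct outcomes. Then in every feasible assignment of outcomes to the six hyperplanes, the hyperplane {x₃=1} is assigned a and the hyperplane {x₃=2} is assigned b. -/

import Mathlib

set_option maxHeartbeats 2000000 in
theorem key17 {A : Type*} (a b c d e f p q r s t u : A)
    (hab : a ≠ b) (hac : a ≠ c) (had : a ≠ d) (hae : a ≠ e) (haf : a ≠ f)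
    (hbc : b ≠ c) (hbd : b ≠ d) (hbe : b ≠ e) (hbf : b ≠ f)
    (hcd : c ≠ d) (hce : c ≠ e) (hcf : c ≠ f)
    (hde : d ≠ e) (hdf : d ≠ f) (hef : e ≠ f)
    (k1 : d = p ∨ d = r ∨ d = t)
    (k2 : f = p ∨ f = r ∨ f = u)
    (k3 : a = p ∨ a = s ∨ a = t)
    (k4 : b = p ∨ b = s ∨ b = u)
    (k5 : a = q ∨ a = r ∨ a = t)
    (k6 : b = q ∨ b = r ∨ b = u)
    (k7 : c = q ∨ c = s ∨ c = t)
    (k8 : e = q ∨ e = s ∨ e = u) : t = a := by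
  by_contra hta
  rcases k3 with hp|hp|hp <;> rcases k5 with hq|hq|hq <;>
    first
    | grind
    | (rcases k1 with x1|x1|x1 <;> rcases k2 with x2|x2|x2 <;>
       rcases k4 with x4|x4|x4 <;> rcases k6 with x6|x6|x6 <;>
       rcases k7 with x7|x7|x7 <;> rcases k8 with x8|x8|x8 <;> grind)

/-- The forcing cube: in every feasible assignment of outcomes to the six
hyperplanes of the given 2×2×2 game form with six pairwise distinct outcomes
a,b,c,d,e,f, the hyperplane {x₃ = 1} is assigned a and {x₃ = 2} is assigned b. -/
theorem stmt17 {A : Type*} (a b c d e f : A)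
    (hab : a ≠ b) (hac : a ≠ c) (had : a ≠ d) (hae : a ≠ e) (haf : a ≠ f)
    (hbc : b ≠ c) (hbd : b ≠ d) (hbe : b ≠ e) (hbf : b ≠ f)
    (hcd : c ≠ d) (hce : c ≠ e) (hcf : c ≠ f)
    (hde : d ≠ e) (hdf : d ≠ f) (hef : e ≠ f)
    (h₁ h₂ h₃ : Fin 2 → A)
    (hfeas : ∀ x y z : Fin 2,
      (![![![d, f], ![a, b]], ![![a, b], ![c, e]]] : Fin 2 → Fin 2 → Fin 2 → A) x y z = h₁ x ∨
      (![![![d, f], ![a, b]], ![![a, b], ![c, e]]] : Fin 2 → Fin 2 → Fin 2 → A) x y z = h₂ y ∨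
      (![![![d, f], ![a, b]], ![![a, b], ![c, e]]] : Fin 2 → Fin 2 → Fin 2 → A) x y z = h₃ z) :
    h₃ 0 = a ∧ h₃ 1 = b := by
  have H000 := hfeas 0 0 0
  have H001 := hfeas 0 0 1
  have H010 := hfeas 0 1 0
  have H011 := hfeas 0 1 1
  have H100 := hfeas 1 0 0
  have H101 := hfeas 1 0 1
  have H110 := hfeas 1 1 0
  have H111 := hfeas 1 1 1
  simp only [Matrix.cons_val_zero, Matrix.cons_val_one, Matrix.head_cons]
    at H000 H001 H010 H011 H100 H101 H110 H111
  constructor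
  · exact key17 a b c d e f (h₁ 0) (h₁ 1) (h₂ 0) (h₂ 1) (h₃ 0) (h₃ 1)
      hab hac had hae haf hbc hbd hbe hbf hcd hce hcf hde hdf hef
      H000 H001 H010 H011 H100 H101 H110 H111
  · exact key17 b a e f c d (h₁ 0) (h₁ 1) (h₂ 0) (h₂ 1) (h₃ 1) (h₃ 0)
      hab.symm hbe hbf hbc hbd hae haf hac had hef hce.symm hde.symm
      hcf.symm hdf.symm hcd
      H001 H000 H011 H010 H101 H100 H111 H110
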